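/- Let α be a real number with 0 < α < 1. Then there exists a constant C(α) > 0, depending only on α, such that the following holds. Let M be a real number with M ≥ 1, and let a_1, …, a_N be positive integers (not necessarily distinct) with a_n ≤ M for all 1 ≤ n ≤ N. For each positive integer d define ω(d) = #{1 ≤ n ≤ N : d divides a_n}. Then for every positive integer s, ∑_{n=1}^{N} (a_n/φ(a_n))^s ≤ C(α)^s · ( N + ∑_{p prime, p ≤ (ln M)^α} ω(p)·(ln p)^s / p ). -/

import Mathlib

open Finset

namespace RomanoffAux

noncomputable section

/-- The set of primes `≤ n`. -/
def P (n : ℕ) : Finset ℕ := (Finset.range (n+1)).filter Nat.Prime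

lemma mem_P {p n : ℕ} : p ∈ P n ↔ p.Prime ∧ p ≤ n := by
  simp [P, Nat.lt_succ_iff, and_comm]

lemma P_mono {m n : ℕ} (h : m ≤ n) : P m ⊆ P n := by
  intro p hp; rw [mem_P] at hp ⊢; exact ⟨hp.1, hp.2.trans h⟩

/-- elementary log inequalities -/
lemma log_sub_log_le {x y : ℝ} (hy : 0 < y) (hxy : y ≤ x) :
    Real.log x - Real.log y ≤ (x - y) / y := by
  have hx : 0 < x := lt_of_lt_of_le hy hxy
  have h := Real.log_le_sub_one_of_pos (div_pos hx hy)
  rw [Real.log_div hx.ne' hy.ne'] at h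
  have : x / y - 1 = (x - y) / y := by field_simp
  linarith

lemma le_log_sub_log {x y : ℝ} (hy : 0 < y) (hxy : y ≤ x) :
    (x - y) / x ≤ Real.log x - Real.log y := by
  have hx : 0 < x := lt_of_lt_of_le hy hxy
  have h := Real.log_le_sub_one_of_pos (div_pos hy hx)
  rw [Real.log_div hy.ne' hx.ne'] at h
  have : y / x - 1 = -((x - y) / x) := by field_simp; ring
  linarith

/-- Chebyshev-type bound from the primorial bound. -/
lemma theta_le (n : ℕ) : ∑ p ∈ P n, Real.log p ≤ n * Real.log 4 := by
  have h4 : (primorial n : ℝ) ≤ (4 : ℝ) ^ n := by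
    exact_mod_cast primorial_le_4_pow n
  have hpos : (0 : ℝ) < primorial n := by exact_mod_cast (primorial_pos n)
  have h1 : Real.log (primorial n) ≤ Real.log ((4:ℝ) ^ n) := Real.log_le_log hpos h4
  rw [Real.log_pow] at h1
  have h2 : Real.log (primorial n) = ∑ p ∈ P n, Real.log p := by
    have : (primorial n : ℝ) = ∏ p ∈ P n, (p : ℝ) := by
      unfold primorial P
      push_cast
      rfl
    rw [this, Real.log_prod]
    intro p hp
    have := (mem_P.mp hp).1.two_le
    positivity
  rw [h2] at h1
  exact h1.trans_eq (by push_cast; ring)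

lemma log_factorial_le (n : ℕ) : Real.log (Nat.factorial n) ≤ n * Real.log n := by
  rcases Nat.eq_zero_or_pos n with h | h
  · simp [h]
  have h1 : (Nat.factorial n : ℝ) ≤ (n : ℝ) ^ n := by exact_mod_cast Nat.factorial_le_pow n
  have h2 : (0 : ℝ) < Nat.factorial n := by exact_mod_cast Nat.factorial_pos n
  have := Real.log_le_log h2 h1
  rwa [Real.log_pow] at this

lemma le_log_factorial (n : ℕ) : (n : ℝ) * Real.log n - n ≤ Real.log (Nat.factorial n) := by
  induction n with
  | zero => simp
  | succ n ih =>
    have hfact : Real.log (Nat.factorial (n+1)) =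
        Real.log (n+1) + Real.log (Nat.factorial n) := by
      rw [Nat.factorial_succ]
      push_cast
      rw [Real.log_mul (by positivity) (by exact_mod_cast (Nat.factorial_pos n).ne')]
    rw [hfact]
    have key : (n : ℝ) * (Real.log (n+1) - Real.log n) ≤ 1 := by
      rcases Nat.eq_zero_or_pos n with h | h
      · simp [h]
      have hn : (0:ℝ) < n := by exact_mod_cast h
      have := log_sub_log_le hn (by linarith : (n:ℝ) ≤ (n:ℝ)+1)
      have h2 : ((n:ℝ)+1 - n)/n = 1/n := by ring_nf
      calc (n : ℝ) * (Real.log (n+1) - Real.log n) ≤ n * (((n:ℝ)+1 - n)/n) := by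
            apply mul_le_mul_of_nonneg_left _ hn.le
            exact_mod_cast this
        _ = 1 := by field_simp; ring
    push_cast
    push_cast at ih
    nlinarith [Real.log_nonneg (by push_cast; linarith : (1:ℝ) ≤ (n:ℝ)+1)]

lemma factorization_factorial_lb {p n : ℕ} (hp : p.Prime) (hpn : p ≤ n) :
    n / p ≤ (Nat.factorial n).factorization p := by
  have hb : Nat.log p n < n + 1 := Nat.lt_succ_of_le (Nat.log_le_self p n)
  have hdvd : p ^ (n / p) ∣ Nat.factorial n := by
    rw [Nat.Prime.pow_dvd_factorial_iff hp hb]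
    have h1 : (1 : ℕ) ∈ Finset.Ico 1 (n+1) := by
      simp [Nat.succ_le_iff, lt_of_lt_of_le hp.pos hpn]
    calc n / p = n / p ^ 1 := by rw [pow_one]
      _ ≤ ∑ i ∈ Finset.Ico 1 (n+1), n / p ^ i :=
        Finset.single_le_sum (f := fun i => n / p ^ i) (fun i _ => Nat.zero_le _) h1
  exact (Nat.Prime.pow_dvd_iff_le_factorization hp (Nat.factorial_pos n).ne').mp hdvd

lemma factorization_factorial_ub {p n : ℕ} (hp : p.Prime) :
    (Nat.factorial n).factorization p ≤ n / (p - 1) := by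
  have hb : Nat.log p n < n + 1 := Nat.lt_succ_of_le (Nat.log_le_self p n)
  have hdvd : p ^ ((Nat.factorial n).factorization p) ∣ Nat.factorial n :=
    Nat.ordProj_dvd _ _
  rw [Nat.Prime.pow_dvd_factorial_iff hp hb] at hdvd
  exact hdvd.trans (Nat.geom_sum_Ico_le hp.two_le _ _)

lemma log_factorial_eq (n : ℕ) :
    Real.log (Nat.factorial n) = ∑ p ∈ P n, ((Nat.factorial n).factorization p : ℝ) * Real.log p := by
  have hne : Nat.factorial n ≠ 0 := (Nat.factorial_pos n).ne'
  have h1 : (Nat.factorial n : ℝ) =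
      ∏ p ∈ (Nat.factorial n).primeFactors, (p:ℝ) ^ ((Nat.factorial n).factorization p) := by
    conv_lhs => rw [← Nat.factorization_prod_pow_eq_self hne]
    rw [Nat.prod_factorization_eq_prod_primeFactors]
    push_cast
    rfl
  rw [h1, Real.log_prod]
  swap
  · intro p hp
    have := (Nat.prime_of_mem_primeFactors hp).two_le
    positivity
  have h2 : ∀ p ∈ (Nat.factorial n).primeFactors,
      Real.log ((p:ℝ) ^ ((Nat.factorial n).factorization p)) =
        ((Nat.factorial n).factorization p : ℝ) * Real.log p := by
    intro p _
    rw [Real.log_pow]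
  rw [Finset.sum_congr rfl h2]
  apply Finset.sum_subset
  · intro p hp
    rw [Nat.mem_primeFactors] at hp
    rw [mem_P]
    exact ⟨hp.1, (Nat.Prime.dvd_factorial hp.1).mp hp.2.1⟩
  · intro p _ hp
    have hpf : (Nat.factorial n).factorization p = 0 := by
      rw [← Nat.support_factorization, Finsupp.mem_support_iff, not_not] at hp
      exact hp
    rw [hpf]
    simp

lemma sum_Ico_telescope (f : ℕ → ℝ) {a b : ℕ} (h : a ≤ b) :
    ∑ m ∈ Ico a b, (f m - f (m+1)) = f a - f b := by
  induction b with
  | zero =>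
    have : a = 0 := Nat.le_zero.mp h
    simp [this]
  | succ b ih =>
    rcases Nat.lt_or_ge a (b+1) with h' | h'
    · have hab : a ≤ b := Nat.lt_succ_iff.mp h'
      rw [Finset.sum_Ico_succ_top hab, ih hab]
      ring
    · have : a = b + 1 := le_antisymm h h'
      simp [this]

lemma sum_Ico_telescope' (f : ℕ → ℝ) {a b : ℕ} (h : a ≤ b) :
    ∑ m ∈ Ico a b, (f (m+1) - f m) = f b - f a := by
  induction b with
  | zero =>
    have : a = 0 := Nat.le_zero.mp h
    simp [this]
  | succ b ih =>
    rcases Nat.lt_or_ge a (b+1) with h' | h'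
    · have hab : a ≤ b := Nat.lt_succ_iff.mp h'
      rw [Finset.sum_Ico_succ_top hab, ih hab]
      ring
    · have : a = b + 1 := le_antisymm h h'
      simp [this]

lemma tel_log {a b : ℕ} (h : a ≤ b) :
    ∑ m ∈ Ico a b, ((Real.log m)⁻¹ - (Real.log ((m:ℝ)+1))⁻¹)
      = (Real.log a)⁻¹ - (Real.log b)⁻¹ := by
  rw [← sum_Ico_telescope (fun k : ℕ => (Real.log k)⁻¹) h]
  apply Finset.sum_congr rfl
  intro m _
  push_cast
  rfl

lemma aux_sqrt {m : ℕ} (hm : 2 ≤ m) :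
    Real.log m / ((m:ℝ) * ((m:ℝ) - 1)) ≤ 6 * (1 / Real.sqrt ((m:ℝ) - 1) - 1 / Real.sqrt m) := by
  have hm2 : (2:ℝ) ≤ (m:ℝ) := by exact_mod_cast hm
  have hm1 : (1:ℝ) ≤ (m:ℝ) - 1 := by linarith
  set t := Real.sqrt ((m:ℝ) - 1) with ht
  set u := Real.sqrt (m:ℝ) with hu
  have ht2 : t^2 = (m:ℝ) - 1 := Real.sq_sqrt (by linarith)
  have hu2 : u^2 = (m:ℝ) := Real.sq_sqrt (by linarith)
  have ht1 : (1:ℝ) ≤ t := by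
    have h1 := Real.sqrt_le_sqrt hm1
    rwa [Real.sqrt_one] at h1
  have htu : t ≤ u := Real.sqrt_le_sqrt (by linarith)
  have hupos : (0:ℝ) < u := lt_of_lt_of_le one_pos (ht1.trans htu)
  have htpos : (0:ℝ) < t := lt_of_lt_of_le one_pos ht1
  -- u ≤ 2 t
  have hu2t : u ≤ 2 * t := by
    have h4 : (m:ℝ) ≤ 4 * ((m:ℝ) - 1) := by linarith
    calc u = Real.sqrt (m:ℝ) := hu
      _ ≤ Real.sqrt (4 * ((m:ℝ) - 1)) := Real.sqrt_le_sqrt h4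
      _ = 2 * t := by
          rw [show (4:ℝ) * ((m:ℝ)-1) = (2:ℝ)^2 * ((m:ℝ)-1) by norm_num,
            Real.sqrt_mul (by positivity), Real.sqrt_sq (by norm_num : (0:ℝ) ≤ 2)]
  -- log m ≤ 2 u
  have hlogm : Real.log m ≤ 2 * u := by
    have h1 : Real.log u ≤ u - 1 := Real.log_le_sub_one_of_pos hupos
    have h2 : Real.log (m:ℝ) = 2 * Real.log u := by
      rw [hu, Real.log_sqrt (by linarith)]
      ring
    linarith
  have hrhs : 1 / t - 1 / u = (u - t) / (t * u) := by
    field_simp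
  have hut : (u - t) * (u + t) = 1 := by nlinarith
  rw [hrhs, mul_div_assoc']
  rw [div_le_div_iff₀ (by nlinarith) (by positivity)]
  have hlognn : 0 ≤ Real.log (m:ℝ) := Real.log_nonneg (by linarith)
  have e1 : (m:ℝ) * ((m:ℝ) - 1) = u^2 * t^2 := by rw [← ht2, ← hu2]
  rw [e1]
  have h2 : Real.log m * (t * u) ≤ 2*u*(t*u) :=
    mul_le_mul_of_nonneg_right hlogm (by positivity)
  refine h2.trans ?_
  have h1 : (0:ℝ) ≤ 2*u^2*t*((2*t-u)*(u-t)) := by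
    apply mul_nonneg (by positivity)
    exact mul_nonneg (by linarith) (by linarith)
  have h3 : 6*(u-t)*(u^2*t^2) - 2*u*(t*u)
      = 2*u^2*t*((2*t-u)*(u-t)) + 2*u^2*t*((u-t)*(u+t)) - 2*u^2*t := by ring
  rw [hut, mul_one] at h3
  linarith

/-- Mertens-type sums -/
def A (n : ℕ) : ℝ := ∑ p ∈ P n, Real.log p / p

def Rr (n : ℕ) : ℝ := ∑ p ∈ P n, ((p : ℝ))⁻¹

lemma one_le_of_mem_P {p n : ℕ} (hp : p ∈ P n) : (1:ℝ) ≤ p := by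
  exact_mod_cast (mem_P.mp hp).1.one_lt.le

lemma log_nonneg_of_mem_P {p n : ℕ} (hp : p ∈ P n) : 0 ≤ Real.log p :=
  Real.log_nonneg (one_le_of_mem_P hp)

lemma A_nonneg (n : ℕ) : 0 ≤ A n := by
  apply Finset.sum_nonneg
  intro p hp
  have h1 := one_le_of_mem_P hp
  have := log_nonneg_of_mem_P hp
  positivity

lemma mertens1_upper (n : ℕ) : A n ≤ Real.log n + Real.log 4 := by
  rcases Nat.eq_zero_or_pos n with h | h
  · simp [h, A, P]
    exact Real.log_nonneg (by norm_num)
  have hn : (0:ℝ) < n := by exact_mod_cast h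
  have key : (n : ℝ) * A n ≤ Real.log (Nat.factorial n) + ∑ p ∈ P n, Real.log p := by
    unfold A
    rw [Finset.mul_sum, log_factorial_eq, ← Finset.sum_add_distrib]
    apply Finset.sum_le_sum
    intro p hp
    obtain ⟨hpp, hpn⟩ := mem_P.mp hp
    have hp1 : (1:ℝ) ≤ p := by exact_mod_cast hpp.one_lt.le
    have hppos : (0:ℝ) < p := by linarith
    have hlog := log_nonneg_of_mem_P hp
    have hfl : (n:ℝ)/p - 1 ≤ ((Nat.factorial n).factorization p : ℝ) := by
      have h1 : (n/p : ℕ) ≤ (Nat.factorial n).factorization p :=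
        factorization_factorial_lb hpp hpn
      have h2 : (n:ℝ)/p - 1 ≤ ((n/p : ℕ) : ℝ) := by
        have := Nat.lt_div_mul_add (a := n) hpp.pos
        have h3 : (n:ℝ) < (n/p:ℕ) * p + p := by exact_mod_cast this
        rw [sub_le_iff_le_add, div_le_iff₀ hppos]
        nlinarith
      exact h2.trans (by exact_mod_cast h1)
    calc (n:ℝ) * (Real.log p / p) = ((n:ℝ)/p) * Real.log p := by ring
      _ ≤ (((Nat.factorial n).factorization p : ℝ) + 1) * Real.log p := by
          apply mul_le_mul_of_nonneg_right _ hlog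
          linarith
      _ = ((Nat.factorial n).factorization p : ℝ) * Real.log p + Real.log p := by ring
  have h3 : (n:ℝ) * A n ≤ n * (Real.log n + Real.log 4) := by
    have := key.trans (add_le_add (log_factorial_le n) (theta_le n))
    linarith
  exact (mul_le_mul_iff_right₀ hn).mp h3

lemma mertens1_lower (n : ℕ) : Real.log n - 7 ≤ A n := by
  rcases Nat.eq_zero_or_pos n with h | h
  · have hP : P 0 = ∅ := by decide
    simp [h, A, hP]
  have hn : (0:ℝ) < n := by exact_mod_cast h
  -- log n! ≤ ∑ (n/(p-1)) log p
  have key1 : Real.log (Nat.factorial n) ≤ ∑ p ∈ P n, (n:ℝ)/((p:ℝ)-1) * Real.log p := by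
    rw [log_factorial_eq]
    apply Finset.sum_le_sum
    intro p hp
    obtain ⟨hpp, hpn⟩ := mem_P.mp hp
    have hp2 : (2:ℝ) ≤ p := by exact_mod_cast hpp.two_le
    have hlog := log_nonneg_of_mem_P hp
    apply mul_le_mul_of_nonneg_right _ hlog
    have h1 : (Nat.factorial n).factorization p ≤ n / (p-1) := factorization_factorial_ub hpp
    have h2 : ((n/(p-1) : ℕ) : ℝ) ≤ (n:ℝ) / ((p:ℝ) - 1) := by
      have := Nat.cast_div_le (m := n) (n := p - 1) (α := ℝ)
      have hcast : ((p - 1 : ℕ) : ℝ) = (p:ℝ) - 1 := by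
        have : 1 ≤ p := hpp.one_lt.le
        push_cast [this]
        ring
      rwa [hcast] at this
    exact le_trans (by exact_mod_cast h1) h2
  have key2 : ∑ p ∈ P n, (n:ℝ)/((p:ℝ)-1) * Real.log p
      = (n:ℝ) * ∑ p ∈ P n, Real.log p / ((p:ℝ)-1) := by
    rw [Finset.mul_sum]
    apply Finset.sum_congr rfl
    intro p _
    ring
  -- ∑ log p/(p-1) ≤ A n + 6
  have key3 : ∑ p ∈ P n, Real.log p / ((p:ℝ)-1) ≤ A n + 6 := by
    have hsplit : ∀ p ∈ P n, Real.log p / ((p:ℝ)-1)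
        = Real.log p / p + Real.log p / (p * ((p:ℝ)-1)) := by
      intro p hp
      obtain ⟨hpp, _⟩ := mem_P.mp hp
      have hp2 : (2:ℝ) ≤ p := by exact_mod_cast hpp.two_le
      have hne : (p:ℝ) ≠ 0 := by linarith
      have hne1 : (p:ℝ) - 1 ≠ 0 := by linarith
      field_simp
      ring
    rw [Finset.sum_congr rfl hsplit, Finset.sum_add_distrib]
    unfold A
    have hrest : ∑ p ∈ P n, Real.log p / ((p:ℝ) * ((p:ℝ)-1)) ≤ 6 := by
      have hsub : P n ⊆ Finset.Icc 2 n := by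
        intro p hp
        obtain ⟨hpp, hpn⟩ := mem_P.mp hp
        exact Finset.mem_Icc.mpr ⟨hpp.two_le, hpn⟩
      have h1 : ∑ p ∈ P n, Real.log p / ((p:ℝ) * ((p:ℝ)-1))
          ≤ ∑ m ∈ Finset.Icc 2 n, Real.log m / ((m:ℝ) * ((m:ℝ)-1)) := by
        apply Finset.sum_le_sum_of_subset_of_nonneg hsub
        intro m hm _
        obtain ⟨hm2, _⟩ := Finset.mem_Icc.mp hm
        have hm2' : (2:ℝ) ≤ m := by exact_mod_cast hm2
        have h1 : (0:ℝ) ≤ Real.log m := Real.log_nonneg (by linarith)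
        have h2 : (0:ℝ) < (m:ℝ) * ((m:ℝ) - 1) := by nlinarith
        exact div_nonneg h1 h2.le
      have h3 : ∑ m ∈ Finset.Icc 2 n, Real.log m / ((m:ℝ) * ((m:ℝ)-1))
          ≤ ∑ m ∈ Finset.Icc 2 n, 6 * (1 / Real.sqrt ((m:ℝ)-1) - 1 / Real.sqrt m) :=
        Finset.sum_le_sum (fun m hm => aux_sqrt (Finset.mem_Icc.mp hm).1)
      have h4 : ∑ m ∈ Finset.Icc 2 n, 6 * (1 / Real.sqrt ((m:ℝ)-1) - 1 / Real.sqrt m) ≤ 6 := by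
        set f : ℕ → ℝ := fun k => 1 / Real.sqrt ((k:ℝ) - 1) with hf
        have heq : ∀ m ∈ Finset.Icc 2 n, 6 * (1 / Real.sqrt ((m:ℝ)-1) - 1 / Real.sqrt m)
            = 6 * (f m - f (m+1)) := by
          intro m _
          have : ((m+1 : ℕ):ℝ) - 1 = (m:ℝ) := by push_cast; ring
          simp only [hf, this]
        rw [Finset.sum_congr rfl heq, ← Finset.mul_sum]
        have hIcc : Finset.Icc 2 n = Finset.Ico 2 (n+1) := by
          rw [Finset.Ico_add_one_right_eq_Icc]
        rcases Nat.lt_or_ge n 2 with h' | h'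
        · rw [hIcc, Finset.Ico_eq_empty (by omega)]
          simp
        · rw [hIcc, sum_Ico_telescope f (by omega)]
          have h5 : (0:ℝ) ≤ f (n+1) := by
            simp only [hf]
            positivity
          have h6 : f 2 = 1 := by
            simp only [hf]
            norm_num
          rw [h6]
          linarith
      linarith
    linarith
  have hd : Real.log n - 1 ≤ ∑ p ∈ P n, Real.log p / ((p:ℝ)-1) := by
    have := (le_log_factorial n).trans (key1.trans_eq key2)
    have h2 : (n:ℝ) * (Real.log n - 1) ≤ (n:ℝ) * ∑ p ∈ P n, Real.log p / ((p:ℝ)-1) := by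
      linarith
    exact (mul_le_mul_iff_right₀ hn).mp h2
  linarith

lemma log_nat_pos {m : ℕ} (hm : 2 ≤ m) : 0 < Real.log m :=
  Real.log_pos (by exact_mod_cast hm)

lemma rr_identity {n : ℕ} (hn : 2 ≤ n) :
    Rr n = A n * (Real.log n)⁻¹
      + ∑ m ∈ Ico 2 n, ((Real.log m)⁻¹ - (Real.log (m+1))⁻¹) * A m := by
  have step1 : ∀ p ∈ P n, ((p:ℝ))⁻¹ = Real.log p / p * (Real.log n)⁻¹
      + ∑ m ∈ Ico p n, Real.log p / p * ((Real.log m)⁻¹ - (Real.log (m+1))⁻¹) := by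
    intro p hp
    obtain ⟨hpp, hpn⟩ := mem_P.mp hp
    have hp2 : (2:ℝ) ≤ p := by exact_mod_cast hpp.two_le
    have hlogp : 0 < Real.log p := log_nat_pos hpp.two_le
    have htel := tel_log hpn
    rw [← Finset.mul_sum, htel]
    have hpne : (p:ℝ) ≠ 0 := by linarith
    have hlogn : 0 < Real.log n := log_nat_pos hn
    field_simp
    ring
  rw [Rr, Finset.sum_congr rfl step1, Finset.sum_add_distrib]
  congr 1
  · rw [← Finset.sum_mul]
    rfl
  · rw [Finset.sum_comm' (t' := Ico 2 n) (s' := fun m => P m) ?hmem]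
    case hmem =>
      intro p m
      constructor
      · rintro ⟨hp, hm⟩
        obtain ⟨hpp, hpn⟩ := mem_P.mp hp
        rw [Finset.mem_Ico] at hm
        exact ⟨mem_P.mpr ⟨hpp, hm.1⟩, Finset.mem_Ico.mpr ⟨le_trans hpp.two_le hm.1, hm.2⟩⟩
      · rintro ⟨hp, hm⟩
        obtain ⟨hpp, hpm⟩ := mem_P.mp hp
        rw [Finset.mem_Ico] at hm
        exact ⟨mem_P.mpr ⟨hpp, le_trans hpm (le_of_lt hm.2)⟩, Finset.mem_Ico.mpr ⟨hpm, hm.2⟩⟩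
    apply Finset.sum_congr rfl
    intro m _
    rw [← Finset.sum_mul, A]
    ring

lemma delta_nonneg {m : ℕ} (hm : 2 ≤ m) :
    0 ≤ (Real.log m)⁻¹ - (Real.log (m+1))⁻¹ := by
  have h1 : 0 < Real.log m := log_nat_pos hm
  have h2 : Real.log m ≤ Real.log (m+1) := by
    apply Real.log_le_log (by positivity)
    push_cast
    linarith
  have h3 : 0 < Real.log ((m:ℕ)+1:ℕ) := lt_of_lt_of_le h1 (by exact_mod_cast h2)
  rw [sub_nonneg]
  apply inv_anti₀ h1
  exact_mod_cast h2

lemma sum_delta_le {n : ℕ} (hn : 2 ≤ n) :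
    ∑ m ∈ Ico 2 n, ((Real.log m)⁻¹ - (Real.log (m+1))⁻¹) ≤ (Real.log 2)⁻¹ := by
  have htel := tel_log hn
  have h2 : (0:ℝ) ≤ (Real.log n)⁻¹ := by
    have := log_nat_pos hn
    positivity
  have h3 : Real.log ((2:ℕ):ℝ) = Real.log 2 := by norm_num
  rw [htel, h3]
  linarith

lemma log4_eq : Real.log 4 = 2 * Real.log 2 := by
  rw [show (4:ℝ) = 2^2 by norm_num, Real.log_pow]
  push_cast
  ring

lemma log2_gt : (0.6931 : ℝ) < Real.log 2 := by
  have := Real.log_two_gt_d9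
  linarith

lemma log2_lt : Real.log 2 < (0.6932 : ℝ) := by
  have := Real.log_two_lt_d9
  linarith

lemma loglog2_ge : -(0.45:ℝ) ≤ Real.log (Real.log 2) := by
  have h2 : (0:ℝ) < Real.log 2 := Real.log_pos (by norm_num)
  have h1 : Real.log (Real.log 2)⁻¹ ≤ (Real.log 2)⁻¹ - 1 :=
    Real.log_le_sub_one_of_pos (by positivity)
  rw [Real.log_inv] at h1
  have h3 : (Real.log 2)⁻¹ ≤ 1.45 := by
    rw [inv_le_comm₀ (by positivity) (by norm_num)]
    nlinarith [log2_gt]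
  linarith

lemma loglog3_le : Real.log (Real.log 3) ≤ (0.39:ℝ) := by
  have h1 : (0:ℝ) < Real.log 3 := Real.log_pos (by norm_num)
  have h2 : Real.log (Real.log 3) ≤ Real.log 3 - 1 := Real.log_le_sub_one_of_pos h1
  have h3 : Real.log 3 ≤ Real.log 4 := Real.log_le_log (by norm_num) (by norm_num)
  rw [log4_eq] at h3
  nlinarith [log2_lt]

lemma delta_mul_log_le {m : ℕ} (hm : 2 ≤ m) :
    ((Real.log m)⁻¹ - (Real.log ((m:ℝ)+1))⁻¹) * Real.log m ≤ ((m:ℝ) * Real.log m)⁻¹ := by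
  have hm2 : (2:ℝ) ≤ (m:ℝ) := by exact_mod_cast hm
  have ha : 0 < Real.log m := log_nat_pos hm
  have hab : Real.log (m:ℝ) ≤ Real.log ((m:ℝ)+1) := Real.log_le_log (by linarith) (by linarith)
  have hb : 0 < Real.log ((m:ℝ)+1) := lt_of_lt_of_le ha hab
  have e1 : ((Real.log m)⁻¹ - (Real.log ((m:ℝ)+1))⁻¹) * Real.log m
      = (Real.log ((m:ℝ)+1) - Real.log m) / Real.log ((m:ℝ)+1) := by
    field_simp
  rw [e1]
  have h3 : Real.log ((m:ℝ)+1) - Real.log m ≤ 1 / (m:ℝ) := by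
    have := log_sub_log_le (by linarith : (0:ℝ) < (m:ℝ)) (by linarith : (m:ℝ) ≤ (m:ℝ)+1)
    have e2 : ((m:ℝ)+1 - m) / m = 1 / m := by ring_nf
    linarith [this.trans_eq e2]
  calc (Real.log ((m:ℝ)+1) - Real.log m) / Real.log ((m:ℝ)+1)
      ≤ (1/(m:ℝ)) / Real.log ((m:ℝ)+1) := (div_le_div_iff_of_pos_right hb).mpr h3
    _ ≤ (1/(m:ℝ)) / Real.log m := by
        apply div_le_div_of_nonneg_left (by positivity) ha hab
    _ = ((m:ℝ) * Real.log m)⁻¹ := by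
        rw [div_div, one_div]

lemma delta_mul_log_ge {m : ℕ} (hm : 2 ≤ m) :
    Real.log (Real.log ((m+2:ℕ))) - Real.log (Real.log ((m+1:ℕ)))
      ≤ ((Real.log m)⁻¹ - (Real.log ((m:ℝ)+1))⁻¹) * Real.log m := by
  have hm2 : (2:ℝ) ≤ (m:ℝ) := by exact_mod_cast hm
  have ha : 0 < Real.log m := log_nat_pos hm
  have hab : Real.log (m:ℝ) ≤ Real.log ((m:ℝ)+1) := Real.log_le_log (by linarith) (by linarith)
  have hb : 0 < Real.log ((m:ℝ)+1) := lt_of_lt_of_le ha hab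
  have hbc : Real.log ((m:ℝ)+1) ≤ Real.log ((m:ℝ)+2) := Real.log_le_log (by linarith) (by linarith)
  have e1 : ((Real.log m)⁻¹ - (Real.log ((m:ℝ)+1))⁻¹) * Real.log m
      = (Real.log ((m:ℝ)+1) - Real.log m) / Real.log ((m:ℝ)+1) := by
    field_simp
  have hc1 : ((m+2:ℕ):ℝ) = (m:ℝ)+2 := by push_cast; ring
  have hc2 : ((m+1:ℕ):ℝ) = (m:ℝ)+1 := by push_cast; ring
  rw [e1, hc1, hc2]
  -- loglog(m+2) - loglog(m+1) ≤ (log(m+2)-log(m+1))/log(m+1) ≤ (1/(m+1))/log(m+1)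
  have h1 : Real.log (Real.log ((m:ℝ)+2)) - Real.log (Real.log ((m:ℝ)+1))
      ≤ (Real.log ((m:ℝ)+2) - Real.log ((m:ℝ)+1)) / Real.log ((m:ℝ)+1) :=
    log_sub_log_le hb hbc
  have h2 : Real.log ((m:ℝ)+2) - Real.log ((m:ℝ)+1) ≤ 1/((m:ℝ)+1) := by
    have := log_sub_log_le (by linarith : (0:ℝ) < (m:ℝ)+1) (by linarith : (m:ℝ)+1 ≤ (m:ℝ)+2)
    have e2 : ((m:ℝ)+2 - ((m:ℝ)+1)) / ((m:ℝ)+1) = 1/((m:ℝ)+1) := by ring_nf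
    linarith [this.trans_eq e2]
  have h3 : Real.log ((m:ℝ)+1) - Real.log m ≥ 1/((m:ℝ)+1) := by
    have := le_log_sub_log (by linarith : (0:ℝ) < (m:ℝ)) (by linarith : (m:ℝ) ≤ (m:ℝ)+1)
    have e2 : ((m:ℝ)+1 - (m:ℝ)) / ((m:ℝ)+1) = 1/((m:ℝ)+1) := by ring_nf
    linarith [e2 ▸ this]
  calc Real.log (Real.log ((m:ℝ)+2)) - Real.log (Real.log ((m:ℝ)+1))
      ≤ (1/((m:ℝ)+1)) / Real.log ((m:ℝ)+1) :=
        h1.trans ((div_le_div_iff_of_pos_right hb).mpr h2)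
    _ ≤ (Real.log ((m:ℝ)+1) - Real.log m) / Real.log ((m:ℝ)+1) :=
        (div_le_div_iff_of_pos_right hb).mpr h3

lemma exp10_ge : (36:ℝ) ≤ Real.exp 10 := by
  have h5 : (6:ℝ) ≤ Real.exp 5 := by linarith [Real.add_one_le_exp (5:ℝ)]
  have he : Real.exp 10 = Real.exp 5 * Real.exp 5 := by
    rw [← Real.exp_add]
    norm_num
  nlinarith [Real.exp_pos 5]

lemma inv_log2_le : (Real.log 2)⁻¹ ≤ (1.45:ℝ) := by
  rw [inv_le_comm₀ (Real.log_pos (by norm_num)) (by norm_num)]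
  nlinarith [log2_gt]

lemma inv_mlogm_le {m : ℕ} (hm : 3 ≤ m) :
    ((m:ℝ) * Real.log m)⁻¹ ≤ Real.log (Real.log m) - Real.log (Real.log ((m-1:ℕ))) := by
  have hc : ((m-1:ℕ):ℝ) = (m:ℝ) - 1 := by
    have h1 : 1 ≤ m := by omega
    push_cast [h1]
    ring
  rw [hc]
  have hm3 : (3:ℝ) ≤ (m:ℝ) := by exact_mod_cast hm
  have h0 : (0:ℝ) < (m:ℝ) - 1 := by linarith
  have h1 : 0 < Real.log ((m:ℝ)-1) := Real.log_pos (by linarith)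
  have h2 : Real.log ((m:ℝ)-1) ≤ Real.log (m:ℝ) := Real.log_le_log h0 (by linarith)
  have hlm : 0 < Real.log (m:ℝ) := lt_of_lt_of_le h1 h2
  have h3 : 1/(m:ℝ) ≤ Real.log (m:ℝ) - Real.log ((m:ℝ)-1) := by
    have h5 := le_log_sub_log h0 (by linarith : (m:ℝ)-1 ≤ (m:ℝ))
    have e : ((m:ℝ) - ((m:ℝ)-1))/(m:ℝ) = 1/(m:ℝ) := by ring
    linarith
  have h4 : (Real.log (m:ℝ) - Real.log ((m:ℝ)-1)) / Real.log (m:ℝ)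
      ≤ Real.log (Real.log m) - Real.log (Real.log ((m:ℝ)-1)) := le_log_sub_log h1 h2
  calc ((m:ℝ) * Real.log m)⁻¹ = (1/(m:ℝ)) / Real.log m := by
        rw [div_div, one_div]
    _ ≤ (Real.log (m:ℝ) - Real.log ((m:ℝ)-1)) / Real.log m := (div_le_div_iff_of_pos_right hlm).mpr h3
    _ ≤ _ := h4

lemma mertens2_upper {n : ℕ} (hn : 2 ≤ n) :
    Rr n ≤ Real.log (Real.log n) + 7 := by
  have hid := rr_identity hn
  have hlogn : 0 < Real.log n := log_nat_pos hn
  have hlog2 : (0:ℝ) < Real.log 2 := Real.log_pos (by norm_num)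
  have hloglogmono : Real.log (Real.log 2) ≤ Real.log (Real.log n) := by
    apply Real.log_le_log hlog2
    apply Real.log_le_log (by norm_num)
    exact_mod_cast hn
  have h1 : A n * (Real.log n)⁻¹ ≤ 3 := by
    have hA : A n ≤ Real.log n + 2 * Real.log 2 := by
      have := mertens1_upper n
      rw [log4_eq] at this
      linarith
    have hinv : (Real.log n)⁻¹ ≤ (Real.log 2)⁻¹ := by
      apply inv_anti₀ hlog2
      apply Real.log_le_log (by norm_num)
      exact_mod_cast hn
    calc A n * (Real.log n)⁻¹ ≤ (Real.log n + 2*Real.log 2) * (Real.log n)⁻¹ :=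
          mul_le_mul_of_nonneg_right hA (by positivity)
      _ = 1 + 2*Real.log 2 * (Real.log n)⁻¹ := by
          field_simp
      _ ≤ 1 + 2*Real.log 2 * (Real.log 2)⁻¹ := by nlinarith
      _ = 3 := by
          rw [mul_assoc, mul_inv_cancel₀ hlog2.ne']
          norm_num
  have h2 : ∑ m ∈ Ico 2 n, ((Real.log m)⁻¹ - (Real.log ((m:ℝ)+1))⁻¹) * A m
      ≤ ∑ m ∈ Ico 2 n, (((m:ℝ) * Real.log m)⁻¹
          + 2*Real.log 2 * ((Real.log m)⁻¹ - (Real.log ((m:ℝ)+1))⁻¹)) := by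
    apply Finset.sum_le_sum
    intro m hm
    have hm2 : 2 ≤ m := (Finset.mem_Ico.mp hm).1
    have hδ := delta_nonneg hm2
    have hAm : A m ≤ Real.log m + 2*Real.log 2 := by
      have := mertens1_upper m
      rw [log4_eq] at this
      linarith
    have hmul := mul_le_mul_of_nonneg_left hAm hδ
    have hdl := delta_mul_log_le hm2
    have e : ((Real.log m)⁻¹ - (Real.log ((m:ℝ)+1))⁻¹) * (Real.log m + 2*Real.log 2)
        = ((Real.log m)⁻¹ - (Real.log ((m:ℝ)+1))⁻¹) * Real.log m
          + 2*Real.log 2 * ((Real.log m)⁻¹ - (Real.log ((m:ℝ)+1))⁻¹) := by ring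
    linarith
  rw [Finset.sum_add_distrib, ← Finset.mul_sum] at h2
  have h3 : ∑ m ∈ Ico 2 n, ((m:ℝ)*Real.log m)⁻¹
      ≤ 1/(2*Real.log 2) + (Real.log (Real.log n) - Real.log (Real.log 2)) := by
    rcases Nat.eq_or_lt_of_le hn with he | hlt
    · rw [← he]
      simp only [Finset.Ico_self, Finset.sum_empty]
      have hc : ((2:ℕ):ℝ) = 2 := by norm_num
      rw [hc, sub_self]
      have hlog2 : (0:ℝ) < Real.log 2 := Real.log_pos (by norm_num)
      positivity
    · rw [Finset.sum_eq_sum_Ico_succ_bot hlt]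
      have hterm : (((2:ℕ):ℝ) * Real.log ((2:ℕ):ℝ))⁻¹ = 1/(2*Real.log 2) := by
        norm_num
      have h4 : ∑ m ∈ Ico 3 n, ((m:ℝ)*Real.log m)⁻¹
          ≤ ∑ m ∈ Ico 3 n, ((fun k : ℕ => Real.log (Real.log ((k-1:ℕ)))) (m+1)
              - (fun k : ℕ => Real.log (Real.log ((k-1:ℕ)))) m) := by
        apply Finset.sum_le_sum
        intro m hm
        have hm3 : 3 ≤ m := (Finset.mem_Ico.mp hm).1
        have := inv_mlogm_le hm3
        simpa using this
      rw [sum_Ico_telescope' (fun k : ℕ => Real.log (Real.log ((k-1:ℕ))))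
        (by omega : 3 ≤ n)] at h4
      simp only [show (3:ℕ) - 1 = 2 from rfl] at h4
      have h5 : Real.log (Real.log ((n-1:ℕ))) ≤ Real.log (Real.log n) := by
        have h' : 2 ≤ n - 1 := by omega
        apply Real.log_le_log (log_nat_pos h')
        apply Real.log_le_log (by exact_mod_cast (by omega : 0 < n - 1))
        exact_mod_cast Nat.sub_le n 1
      have hcast2 : Real.log ((2:ℕ):ℝ) = Real.log 2 := by norm_num
      rw [hcast2] at h4
      push_cast at hterm ⊢
      linarith
  have hsd := sum_delta_le hn
  have h6 : 1/(2*Real.log 2) - Real.log (Real.log 2) ≤ 2 := by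
    have hi : (Real.log 2)⁻¹ ≤ 1.45 := inv_log2_le
    have : 1/(2*Real.log 2) = (Real.log 2)⁻¹ / 2 := by
      field_simp
    have := loglog2_ge
    linarith
  have h7 : 2*Real.log 2 * ∑ m ∈ Ico 2 n, ((Real.log m)⁻¹ - (Real.log ((m:ℝ)+1))⁻¹)
      ≤ 2 := by
    calc 2*Real.log 2 * ∑ m ∈ Ico 2 n, ((Real.log m)⁻¹ - (Real.log ((m:ℝ)+1))⁻¹)
        ≤ 2*Real.log 2 * (Real.log 2)⁻¹ := by
          apply mul_le_mul_of_nonneg_left hsd (by positivity)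
      _ = 2 := by
          rw [mul_assoc, mul_inv_cancel₀ hlog2.ne']
          norm_num
  rw [hid]
  linarith

lemma mertens2_lower {n : ℕ} (hn : 3 ≤ n) :
    Real.log (Real.log n) - 12 ≤ Rr n := by
  have hn2 : 2 ≤ n := by omega
  have hid := rr_identity hn2
  have hlogn : 0 < Real.log n := log_nat_pos hn2
  have hlog2 : (0:ℝ) < Real.log 2 := Real.log_pos (by norm_num)
  have hfirst : 0 ≤ A n * (Real.log n)⁻¹ := mul_nonneg (A_nonneg n) (by positivity)
  have h1 : ∀ m ∈ Ico 2 n,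
      ((fun k : ℕ => Real.log (Real.log ((k+1:ℕ)))) (m+1)
        - (fun k : ℕ => Real.log (Real.log ((k+1:ℕ)))) m)
        - 7 * ((Real.log m)⁻¹ - (Real.log ((m:ℝ)+1))⁻¹)
      ≤ ((Real.log m)⁻¹ - (Real.log ((m:ℝ)+1))⁻¹) * A m := by
    intro m hm
    have hm2 : 2 ≤ m := (Finset.mem_Ico.mp hm).1
    have hδ := delta_nonneg hm2
    have hAm := mertens1_lower m
    have hge := delta_mul_log_ge hm2
    have hmul := mul_le_mul_of_nonneg_left hAm hδ
    have e : ((Real.log m)⁻¹ - (Real.log ((m:ℝ)+1))⁻¹) * (Real.log m - 7)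
        = ((Real.log m)⁻¹ - (Real.log ((m:ℝ)+1))⁻¹) * Real.log m
          - 7 * ((Real.log m)⁻¹ - (Real.log ((m:ℝ)+1))⁻¹) := by ring
    have e2 : m + 1 + 1 = m + 2 := rfl
    simp only [e2]
    linarith
  have h2 := Finset.sum_le_sum h1
  rw [Finset.sum_sub_distrib, sum_Ico_telescope' (fun k : ℕ => Real.log (Real.log ((k+1:ℕ)))) hn2,
    ← Finset.mul_sum] at h2
  have hsd := sum_delta_le hn2
  have h3 : Real.log (Real.log n) ≤ Real.log (Real.log ((n+1:ℕ))) := by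
    apply Real.log_le_log hlogn
    apply Real.log_le_log (by positivity)
    push_cast
    linarith
  have h4 : Real.log (Real.log ((2+1:ℕ))) = Real.log (Real.log 3) := by norm_num
  have h5 : 7 * ∑ m ∈ Ico 2 n, ((Real.log m)⁻¹ - (Real.log ((m:ℝ)+1))⁻¹)
      ≤ 7 * (Real.log 2)⁻¹ := by linarith
  have h6 : 7 * (Real.log 2)⁻¹ ≤ 10.15 := by
    have := inv_log2_le
    linarith
  have h7 := loglog3_le
  rw [hid]
  simp only [h4] at h2
  linarith

lemma mertens2'_upper {n : ℕ} (hn : 2 ≤ n) :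
    ∑ p ∈ P n, ((p : ℝ) - 1)⁻¹ ≤ Real.log (Real.log n) + 8 := by
  have h1 : ∑ p ∈ P n, (((p:ℝ)-1)⁻¹ - ((p:ℝ))⁻¹) ≤ 1 := by
    have hsub : P n ⊆ Finset.Icc 2 n := by
      intro p hp
      obtain ⟨hpp, hpn⟩ := mem_P.mp hp
      exact Finset.mem_Icc.mpr ⟨hpp.two_le, hpn⟩
    have hterm : ∀ m ∈ Finset.Icc 2 n, (0:ℝ) ≤ ((m:ℝ)-1)⁻¹ - ((m:ℝ))⁻¹ := by
      intro m hm
      have hm2 : (2:ℝ) ≤ m := by exact_mod_cast (Finset.mem_Icc.mp hm).1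
      rw [sub_nonneg]
      apply inv_anti₀ (by linarith)
      linarith
    have h2 : ∑ p ∈ P n, (((p:ℝ)-1)⁻¹ - ((p:ℝ))⁻¹)
        ≤ ∑ m ∈ Finset.Icc 2 n, (((m:ℝ)-1)⁻¹ - ((m:ℝ))⁻¹) :=
      Finset.sum_le_sum_of_subset_of_nonneg hsub (fun m hm _ => hterm m hm)
    have hIcc : Finset.Icc 2 n = Finset.Ico 2 (n+1) := by rw [Finset.Ico_add_one_right_eq_Icc]
    have htel := sum_Ico_telescope (fun k : ℕ => ((k:ℝ)-1)⁻¹) (by omega : 2 ≤ n+1)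
    have hcong : ∀ m ∈ Finset.Ico 2 (n+1), ((m:ℝ)-1)⁻¹ - ((m:ℝ))⁻¹
        = (fun k : ℕ => ((k:ℝ)-1)⁻¹) m - (fun k : ℕ => ((k:ℝ)-1)⁻¹) (m+1) := by
      intro m _
      simp only []
      push_cast
      ring_nf
    have h3 : ∑ m ∈ Finset.Icc 2 n, (((m:ℝ)-1)⁻¹ - ((m:ℝ))⁻¹)
        = (((2:ℕ):ℝ)-1)⁻¹ - (((n+1:ℕ):ℝ)-1)⁻¹ := by
      rw [hIcc, Finset.sum_congr rfl hcong, htel]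
    have h4 : (0:ℝ) ≤ (((n+1:ℕ):ℝ)-1)⁻¹ := by
      have : (2:ℝ) ≤ ((n+1:ℕ):ℝ) := by exact_mod_cast Nat.le_succ_of_le hn
      exact inv_nonneg.mpr (by linarith)
    have h5 : (((2:ℕ):ℝ)-1)⁻¹ = 1 := by norm_num
    linarith [h2.trans_eq h3]
  have h6 : ∑ p ∈ P n, ((p:ℝ)-1)⁻¹
      = Rr n + ∑ p ∈ P n, (((p:ℝ)-1)⁻¹ - ((p:ℝ))⁻¹) := by
    rw [Rr, ← Finset.sum_add_distrib]
    apply Finset.sum_congr rfl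
    intro p _
    ring
  have := mertens2_upper hn
  rw [h6]
  linarith

lemma prod_ratio_le_exp (S : Finset ℕ) (hS : ∀ p ∈ S, 2 ≤ p) :
    ∏ p ∈ S, ((p:ℝ)/((p:ℝ)-1)) ≤ Real.exp (∑ p ∈ S, ((p:ℝ)-1)⁻¹) := by
  rw [Real.exp_sum]
  apply Finset.prod_le_prod
  · intro p hp
    have h2 : (2:ℝ) ≤ p := by exact_mod_cast hS p hp
    exact div_nonneg (by linarith) (by linarith)
  · intro p hp
    have h2 : (2:ℝ) ≤ p := by exact_mod_cast hS p hp
    have hne : (p:ℝ) - 1 ≠ 0 := by linarith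
    have he : (p:ℝ)/((p:ℝ)-1) = ((p:ℝ)-1)⁻¹ + 1 := by
      field_simp
      ring
    rw [he]
    exact Real.add_one_le_exp _

lemma prod_ratio_nonneg (S : Finset ℕ) (hS : ∀ p ∈ S, 2 ≤ p) :
    0 ≤ ∏ p ∈ S, ((p:ℝ)/((p:ℝ)-1)) := by
  apply Finset.prod_nonneg
  intro p hp
  have h2 : (2:ℝ) ≤ p := by exact_mod_cast hS p hp
  exact div_nonneg (by linarith) (by linarith)

lemma inv_sub_one_le_3log {p : ℕ} (hp : p.Prime) :
    ((p:ℝ)-1)⁻¹ ≤ 3 * Real.log p / p := by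
  have hp2 : (2:ℝ) ≤ p := by exact_mod_cast hp.two_le
  have key : (p:ℝ) ≤ 3 * Real.log p * ((p:ℝ)-1) := by
    rcases eq_or_lt_of_le hp.two_le with he | hlt
    · rw [← he]
      push_cast
      nlinarith [log2_gt]
    · have hp3 : (3:ℝ) ≤ p := by exact_mod_cast hlt
      have hlog3 : (1:ℝ) ≤ Real.log p := by
        rw [show (1:ℝ) = Real.log (Real.exp 1) by rw [Real.log_exp]]
        apply Real.log_le_log (Real.exp_pos 1)
        have := Real.exp_one_lt_d9
        linarith
      nlinarith
  rw [inv_eq_one_div, div_le_div_iff₀ (by linarith) (by linarith)]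
  linarith

lemma totient_ratio {a : ℕ} (ha : 0 < a) :
    (a:ℝ) / ((a.totient : ℝ)) = ∏ p ∈ a.primeFactors, ((p:ℝ)/((p:ℝ)-1)) := by
  have h := Nat.totient_mul_prod_primeFactors a
  have hφ : 0 < a.totient := Nat.totient_pos.mpr ha
  have hcast : ((a.totient:ℝ)) * ∏ p ∈ a.primeFactors, (p:ℝ)
      = (a:ℝ) * ∏ p ∈ a.primeFactors, (((p-1:ℕ)):ℝ) := by
    have hq := congrArg (fun k : ℕ => (k:ℝ)) h
    push_cast at hq
    exact hq
  have hsub : ∀ p ∈ a.primeFactors, (((p - 1 : ℕ)) : ℝ) = (p:ℝ) - 1 := by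
    intro p hp
    have h1 : 1 ≤ p := (Nat.prime_of_mem_primeFactors hp).one_lt.le
    push_cast [h1]
    ring
  rw [Finset.prod_congr rfl hsub] at hcast
  have hprod1 : (0:ℝ) < ∏ p ∈ a.primeFactors, (p:ℝ) := by
    apply Finset.prod_pos
    intro p hp
    have := (Nat.prime_of_mem_primeFactors hp).two_le
    have : (2:ℝ) ≤ p := by exact_mod_cast this
    linarith
  have hprod2 : (0:ℝ) < ∏ p ∈ a.primeFactors, ((p:ℝ)-1) := by
    apply Finset.prod_pos
    intro p hp
    have := (Nat.prime_of_mem_primeFactors hp).two_le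
    have : (2:ℝ) ≤ p := by exact_mod_cast this
    linarith
  have hφ' : (0:ℝ) < a.totient := by exact_mod_cast hφ
  rw [Finset.prod_div_distrib]
  rw [div_eq_div_iff hφ'.ne' hprod2.ne']
  linarith [hcast]

lemma claimA (α : ℝ) (hα0 : 0 < α) (hα1 : α < 1) (M : ℝ)
    (hM : Real.exp (Real.exp (4/α)) < M) (a : ℕ) (ha : 0 < a) (haM : (a:ℝ) ≤ M) :
    ∏ p ∈ a.primeFactors.filter (fun p : ℕ => ¬ p ≤ ⌊(Real.log M)^α⌋₊), ((p:ℝ)/((p:ℝ)-1))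
      ≤ Real.exp (2*(Real.log (2/α) + 20)) := by
  have hα0' : α ≠ 0 := hα0.ne'
  have hL1 : Real.exp (4/α) < Real.log M := by
    have h := Real.log_lt_log (Real.exp_pos _) hM
    rwa [Real.log_exp] at h
  have hL1pos : 0 < Real.log M := lt_trans (Real.exp_pos _) hL1
  have hL2 : 4/α < Real.log (Real.log M) := by
    have h := Real.log_lt_log (Real.exp_pos _) hL1
    rwa [Real.log_exp] at h
  have h4α : (4:ℝ) < 4/α := by
    rw [lt_div_iff₀ hα0]
    nlinarith
  have hL2pos : 0 < Real.log (Real.log M) := by linarith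
  set L2 := Real.log (Real.log M) with hL2def
  set y := (Real.log M)^α with hydef
  have hypos : 0 < y := Real.rpow_pos_of_pos hL1pos α
  have hlogy : Real.log y = α * L2 := Real.log_rpow hL1pos α
  have hαL2 : 4 < α * L2 := by
    have := mul_lt_mul_of_pos_left hL2 hα0
    have he : α * (4/α) = 4 := by field_simp
    linarith
  have hy5 : (5:ℝ) ≤ y := by
    have h1 : Real.exp 4 ≤ Real.exp (Real.log y) := Real.exp_le_exp.mpr (by linarith [hlogy])
    rw [Real.exp_log hypos] at h1
    have := Real.add_one_le_exp (4:ℝ)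
    linarith
  set q := ⌊y⌋₊ with hqdef
  have hq4 : 4 ≤ q := Nat.le_floor (by exact_mod_cast (by linarith : (4:ℝ) ≤ y))
  set SL := a.primeFactors.filter (fun p : ℕ => ¬ p ≤ q) with hSLdef
  have hSLmem : ∀ p ∈ SL, p.Prime ∧ p ∣ a ∧ y < (p:ℝ) := by
    intro p hp
    rw [hSLdef, Finset.mem_filter, Nat.mem_primeFactors] at hp
    refine ⟨hp.1.1, hp.1.2.1, ?_⟩
    have hq : q < p := by omega
    calc y < (⌊y⌋₊:ℝ) + 1 := Nat.lt_floor_add_one y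
      _ ≤ p := by exact_mod_cast hq
  have hSL2 : ∀ p ∈ SL, 2 ≤ p := fun p hp => (hSLmem p hp).1.two_le
  -- product ≤ exp of sum
  have h1 := prod_ratio_le_exp SL hSL2
  -- sum (p-1)⁻¹ ≤ 2 * sum p⁻¹
  have h2 : ∑ p ∈ SL, ((p:ℝ)-1)⁻¹ ≤ 2 * ∑ p ∈ SL, ((p:ℝ))⁻¹ := by
    rw [Finset.mul_sum]
    apply Finset.sum_le_sum
    intro p hp
    have hp2 : (2:ℝ) ≤ p := by exact_mod_cast hSL2 p hp
    have e : 2 * ((p:ℝ))⁻¹ = 2/(p:ℝ) := by rw [div_eq_mul_inv]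
    rw [e, inv_eq_one_div, div_le_div_iff₀ (by linarith) (by linarith)]
    linarith
  -- split at log M
  have hsplitSL := Finset.sum_filter_add_sum_filter_not SL
    (fun p : ℕ => (p:ℝ) ≤ Real.log M) (fun p => ((p:ℝ))⁻¹)
  have hbig : ∑ p ∈ SL.filter (fun p : ℕ => ¬((p:ℝ) ≤ Real.log M)), ((p:ℝ))⁻¹ ≤ 1 := by
    set SL2 := SL.filter (fun p : ℕ => ¬((p:ℝ) ≤ Real.log M)) with hSL2def
    have hsub : SL2 ⊆ a.primeFactors := by
      refine subset_trans (Finset.filter_subset _ _) ?_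
      rw [hSLdef]
      exact Finset.filter_subset _ _
    have hdvd : (∏ p ∈ SL2, p) ∣ a :=
      dvd_trans (Finset.prod_dvd_prod_of_subset _ _ _ hsub) (Nat.prod_primeFactors_dvd a)
    have hprodle : (∏ p ∈ SL2, (p:ℝ)) ≤ M := by
      have h3 : (∏ p ∈ SL2, p) ≤ a := Nat.le_of_dvd ha hdvd
      calc (∏ p ∈ SL2, (p:ℝ)) = ((∏ p ∈ SL2, p : ℕ):ℝ) := by push_cast; rfl
        _ ≤ (a:ℝ) := by exact_mod_cast h3
        _ ≤ M := haM
    have hgt : ∀ p ∈ SL2, Real.log M < (p:ℝ) := fun p hp =>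
      lt_of_not_ge (Finset.mem_filter.mp hp).2
    have hcardb : (SL2.card : ℝ) * L2 ≤ Real.log M := by
      have h4 : (Real.log M)^(SL2.card) ≤ ∏ p ∈ SL2, (p:ℝ) := by
        rw [← Finset.prod_const]
        exact Finset.prod_le_prod (fun p _ => hL1pos.le) (fun p hp => (hgt p hp).le)
      have h5 : Real.log ((Real.log M)^(SL2.card)) ≤ Real.log M :=
        Real.log_le_log (pow_pos hL1pos _) (h4.trans hprodle)
      rwa [Real.log_pow] at h5
    have h6 : ∑ p ∈ SL2, ((p:ℝ))⁻¹ ≤ (SL2.card : ℝ) * (Real.log M)⁻¹ := by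
      have := Finset.sum_le_card_nsmul SL2 (fun p => ((p:ℝ))⁻¹) ((Real.log M)⁻¹)
        (fun p hp => inv_anti₀ hL1pos (hgt p hp).le)
      rwa [nsmul_eq_mul] at this
    have h7 : (SL2.card : ℝ) * (Real.log M)⁻¹ ≤ L2⁻¹ := by
      have hcard2 : (SL2.card : ℝ) ≤ Real.log M / L2 := (le_div_iff₀ hL2pos).mpr hcardb
      calc (SL2.card : ℝ) * (Real.log M)⁻¹ ≤ (Real.log M / L2) * (Real.log M)⁻¹ :=
            mul_le_mul_of_nonneg_right hcard2 (inv_nonneg.mpr hL1pos.le)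
        _ = L2⁻¹ := by
            field_simp
    have h8 : L2⁻¹ ≤ 1 := by
      rw [inv_le_one_iff₀]
      right
      linarith
    linarith
  have hsmall : ∑ p ∈ SL.filter (fun p : ℕ => ((p:ℝ) ≤ Real.log M)), ((p:ℝ))⁻¹
      ≤ Real.log (2/α) + 19 := by
    have hlogM2 : (5:ℝ) ≤ Real.log M := by
      have h1 := Real.add_one_le_exp (4/α)
      linarith
    have hQL : q ≤ ⌊Real.log M⌋₊ := by
      apply Nat.floor_le_floor
      have h9 : (Real.log M)^α ≤ (Real.log M)^(1:ℝ) :=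
        Real.rpow_le_rpow_of_exponent_le (by linarith) hα1.le
      rwa [Real.rpow_one] at h9
    have hPsub : P q ⊆ P ⌊Real.log M⌋₊ := P_mono hQL
    have hsubset : SL.filter (fun p : ℕ => ((p:ℝ) ≤ Real.log M)) ⊆ P ⌊Real.log M⌋₊ \ P q := by
      intro p hp
      rw [Finset.mem_filter] at hp
      obtain ⟨hpSL, hpL⟩ := hp
      have hm := hSLmem p hpSL
      rw [Finset.mem_sdiff]
      constructor
      · exact mem_P.mpr ⟨hm.1, Nat.le_floor hpL⟩
      · intro hcon
        have hple := (mem_P.mp hcon).2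
        rw [hSLdef, Finset.mem_filter] at hpSL
        exact hpSL.2 hple
    have h10 : ∑ p ∈ SL.filter (fun p : ℕ => ((p:ℝ) ≤ Real.log M)), ((p:ℝ))⁻¹
        ≤ ∑ p ∈ P ⌊Real.log M⌋₊ \ P q, ((p:ℝ))⁻¹ := by
      apply Finset.sum_le_sum_of_subset_of_nonneg hsubset
      intro p _ _
      exact inv_nonneg.mpr (Nat.cast_nonneg p)
    have h11 : ∑ p ∈ P ⌊Real.log M⌋₊ \ P q, ((p:ℝ))⁻¹ = Rr ⌊Real.log M⌋₊ - Rr q :=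
      Finset.sum_sdiff_eq_sub hPsub
    have hfloorL2 : 2 ≤ ⌊Real.log M⌋₊ := Nat.le_floor (by exact_mod_cast (by linarith : (2:ℝ) ≤ Real.log M))
    have h12 := mertens2_upper hfloorL2
    have h13 := mertens2_lower (show 3 ≤ q by omega)
    have h14 : Real.log (Real.log (⌊Real.log M⌋₊:ℝ)) ≤ Real.log L2 := by
      apply Real.log_le_log (log_nat_pos hfloorL2)
      exact Real.log_le_log (by exact_mod_cast lt_of_lt_of_le two_pos hfloorL2)
        (Nat.floor_le hL1pos.le)
    have h15 : Real.log L2 - Real.log (2/α) ≤ Real.log (Real.log (q:ℝ)) := by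
      have hq2 : y/2 ≤ (q:ℝ) := by
        have hfl : y - 1 < (⌊y⌋₊:ℝ) := Nat.sub_one_lt_floor y
        linarith
      have hlogq : α * L2 / 2 ≤ Real.log (q:ℝ) := by
        have h16 : Real.log (y/2) ≤ Real.log (q:ℝ) :=
          Real.log_le_log (by positivity) hq2
        have h17 : Real.log (y/2) = α*L2 - Real.log 2 := by
          rw [Real.log_div hypos.ne' two_ne_zero, hlogy]
        have h18 : Real.log 2 ≤ 1 := by linarith [log2_lt]
        linarith
      have h19 : Real.log (α * L2 / 2) ≤ Real.log (Real.log (q:ℝ)) :=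
        Real.log_le_log (by positivity) hlogq
      have h20 : Real.log (α * L2 / 2) = Real.log L2 - Real.log (2/α) := by
        rw [show α * L2/2 = L2/(2/α) by field_simp]
        rw [Real.log_div hL2pos.ne' (by positivity)]
      linarith
    calc ∑ p ∈ SL.filter (fun p : ℕ => ((p:ℝ) ≤ Real.log M)), ((p:ℝ))⁻¹
        ≤ Rr ⌊Real.log M⌋₊ - Rr q := h10.trans_eq h11
      _ ≤ Real.log (2/α) + 19 := by linarith
  have htotal : ∑ p ∈ SL, ((p:ℝ))⁻¹ ≤ Real.log (2/α) + 20 := by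
    rw [← hsplitSL]
    linarith
  calc ∏ p ∈ SL, ((p:ℝ)/((p:ℝ)-1)) ≤ Real.exp (∑ p ∈ SL, ((p:ℝ)-1)⁻¹) := h1
    _ ≤ Real.exp (2*(Real.log (2/α) + 20)) := by
        apply Real.exp_le_exp.mpr
        linarith

/-- Small-prime pointwise estimate (Claim B). -/
lemma claimB (S : Finset ℕ) (hS : ∀ p ∈ S, p.Prime) (s : ℕ) (hs : 1 ≤ s) :
    (∏ p ∈ S, ((p : ℝ) / ((p : ℝ) - 1))) ^ s ≤
      (Real.exp 20) ^ s * (1 + ∑ p ∈ S, (Real.log p) ^ s / p) := by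
  have hS2 : ∀ p ∈ S, 2 ≤ p := fun p hp => (hS p hp).two_le
  have hS2' : ∀ p ∈ S, (2:ℝ) ≤ p := fun p hp => by exact_mod_cast hS2 p hp
  set u := ∑ p ∈ S, ((p:ℝ)-1)⁻¹ with hu_def
  set T := ∑ p ∈ S, Real.log p / p with hT_def
  have hT0 : 0 ≤ T := by
    apply Finset.sum_nonneg
    intro p hp
    have h2 := hS2' p hp
    have : 0 ≤ Real.log p := Real.log_nonneg (by linarith)
    positivity
  have hSig0 : 0 ≤ ∑ p ∈ S, (Real.log p) ^ s / p := by
    apply Finset.sum_nonneg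
    intro p hp
    have h2 := hS2' p hp
    have : 0 ≤ Real.log p := Real.log_nonneg (by linarith)
    positivity
  have hD := prod_ratio_le_exp S hS2
  have hD0 := prod_ratio_nonneg S hS2
  rcases le_or_gt u 20 with hu | hu
  · -- easy case
    have h1 : (∏ p ∈ S, ((p : ℝ) / ((p : ℝ) - 1))) ^ s ≤ (Real.exp 20) ^ s := by
      apply pow_le_pow_left₀ hD0
      exact hD.trans (Real.exp_le_exp.mpr hu)
    refine h1.trans ?_
    apply le_mul_of_one_le_right (by positivity)
    linarith
  · -- hard case
    have hu3T : u ≤ 3 * T := by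
      rw [hu_def, hT_def, Finset.mul_sum]
      apply Finset.sum_le_sum
      intro p hp
      have := inv_sub_one_le_3log (hS p hp)
      calc ((p:ℝ)-1)⁻¹ ≤ 3 * Real.log p / p := this
        _ = 3 * (Real.log p / p) := by ring
    have hT203 : (20:ℝ)/3 < T := by linarith
    -- u ≤ log T + 10
    have hulog : u ≤ Real.log T + 10 := by
      set w := Real.exp T with hw_def
      have hw2 : (2:ℝ) ≤ w := by
        have := Real.add_one_le_exp T
        rw [hw_def]
        linarith
      have hfloor2 : 2 ≤ ⌊w⌋₊ := Nat.le_floor (by exact_mod_cast hw2)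
      have hsplit := Finset.sum_filter_add_sum_filter_not S (fun p : ℕ => (p:ℝ) ≤ w)
        (fun p => ((p:ℝ)-1)⁻¹)
      have hu1 : ∑ p ∈ S.filter (fun p : ℕ => (p:ℝ) ≤ w), ((p:ℝ)-1)⁻¹
          ≤ Real.log T + 8 := by
        have hsub : S.filter (fun p : ℕ => (p:ℝ) ≤ w) ⊆ P ⌊w⌋₊ := by
          intro p hp
          rw [Finset.mem_filter] at hp
          exact mem_P.mpr ⟨hS p hp.1, Nat.le_floor hp.2⟩
        have h1 : ∑ p ∈ S.filter (fun p : ℕ => (p:ℝ) ≤ w), ((p:ℝ)-1)⁻¹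
            ≤ ∑ p ∈ P ⌊w⌋₊, ((p:ℝ)-1)⁻¹ := by
          apply Finset.sum_le_sum_of_subset_of_nonneg hsub
          intro p hp _
          have h2 : (2:ℝ) ≤ p := by exact_mod_cast (mem_P.mp hp).1.two_le
          exact inv_nonneg.mpr (by linarith)
        have h2 := mertens2'_upper hfloor2
        have h3 : Real.log (Real.log (⌊w⌋₊:ℝ)) ≤ Real.log T := by
          have hfw : (⌊w⌋₊:ℝ) ≤ w := Nat.floor_le (by linarith)
          have h4 : Real.log (⌊w⌋₊:ℝ) ≤ T := by
            calc Real.log (⌊w⌋₊:ℝ) ≤ Real.log w := Real.log_le_log (by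
                  exact_mod_cast Nat.lt_of_lt_of_le Nat.zero_lt_two hfloor2) hfw
              _ = T := by rw [hw_def, Real.log_exp]
          exact Real.log_le_log (log_nat_pos hfloor2) h4
        linarith
      have hu2 : ∑ p ∈ S.filter (fun p : ℕ => ¬((p:ℝ) ≤ w)), ((p:ℝ)-1)⁻¹ ≤ 2 := by
        have h1 : ∀ p ∈ S.filter (fun p : ℕ => ¬((p:ℝ) ≤ w)), ((p:ℝ)-1)⁻¹
            ≤ (2/T) * (Real.log p / p) := by
          intro p hp
          rw [Finset.mem_filter] at hp
          have hpw : w < (p:ℝ) := lt_of_not_ge hp.2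
          have hp2 : (2:ℝ) ≤ p := hS2' p hp.1
          have hlogp : T ≤ Real.log p := by
            calc T = Real.log w := by rw [hw_def, Real.log_exp]
              _ ≤ Real.log p := Real.log_le_log (by linarith) hpw.le
          have hTpos : 0 < T := by linarith
          have h2 : ((p:ℝ)-1)⁻¹ ≤ 2/(p:ℝ) := by
            rw [inv_eq_one_div, div_le_div_iff₀ (by linarith) (by linarith)]
            linarith
          calc ((p:ℝ)-1)⁻¹ ≤ 2/(p:ℝ) := h2
            _ ≤ (2/T) * (Real.log p / p) := by
              rw [div_mul_div_comm]
              rw [div_le_div_iff₀ (by linarith) (by positivity)]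
              nlinarith
        calc ∑ p ∈ S.filter (fun p : ℕ => ¬((p:ℝ) ≤ w)), ((p:ℝ)-1)⁻¹
            ≤ ∑ p ∈ S.filter (fun p : ℕ => ¬((p:ℝ) ≤ w)), (2/T) * (Real.log p / p) :=
              Finset.sum_le_sum h1
          _ = (2/T) * ∑ p ∈ S.filter (fun p : ℕ => ¬((p:ℝ) ≤ w)), (Real.log p / p) := by
              rw [Finset.mul_sum]
          _ ≤ (2/T) * T := by
              apply mul_le_mul_of_nonneg_left _ (by positivity)
              rw [hT_def]
              apply Finset.sum_le_sum_of_subset_of_nonneg (Finset.filter_subset _ _)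
              intro p hp _
              have h2 := hS2' p hp
              have : 0 ≤ Real.log p := Real.log_nonneg (by linarith)
              positivity
          _ = 2 := by
              field_simp
      rw [hu_def, ← hsplit]
      linarith
    have hTexp : Real.exp (u - 10) ≤ T := by
      have h1 : u - 10 ≤ Real.log T := by linarith
      calc Real.exp (u - 10) ≤ Real.exp (Real.log T) := Real.exp_le_exp.mpr h1
        _ = T := Real.exp_log (by linarith)
    have hTbig : Real.exp 10 ≤ T := by
      have : Real.exp 10 ≤ Real.exp (u - 10) := Real.exp_le_exp.mpr (by linarith)
      linarith
    have hT4 : (0:ℝ) < T/4 := by linarith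
    -- tail bound
    set w' := Real.exp (T/4) with hw'_def
    have hT36 : (36:ℝ) ≤ T := le_trans exp10_ge hTbig
    have hw'2 : (2:ℝ) ≤ w' := by
      have := Real.add_one_le_exp (T/4)
      rw [hw'_def]
      linarith
    have hfloor1 : 1 ≤ ⌊w'⌋₊ := Nat.le_floor (by exact_mod_cast (by linarith : (1:ℝ) ≤ w'))
    have hhead : ∑ p ∈ S.filter (fun p : ℕ => (p:ℝ) ≤ w'), (Real.log p / p)
        ≤ T/4 + Real.log 4 := by
      have hsub : S.filter (fun p : ℕ => (p:ℝ) ≤ w') ⊆ P ⌊w'⌋₊ := by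
        intro p hp
        rw [Finset.mem_filter] at hp
        exact mem_P.mpr ⟨hS p hp.1, Nat.le_floor hp.2⟩
      have h1 : ∑ p ∈ S.filter (fun p : ℕ => (p:ℝ) ≤ w'), (Real.log p / p) ≤ A ⌊w'⌋₊ := by
        rw [A]
        apply Finset.sum_le_sum_of_subset_of_nonneg hsub
        intro p hp _
        have h2 : (1:ℝ) ≤ p := one_le_of_mem_P hp
        have := log_nonneg_of_mem_P hp
        positivity
      have h2 := mertens1_upper ⌊w'⌋₊
      have h3 : Real.log (⌊w'⌋₊:ℝ) ≤ T/4 := by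
        calc Real.log (⌊w'⌋₊:ℝ) ≤ Real.log w' := Real.log_le_log (by
              exact_mod_cast hfloor1) (Nat.floor_le (by linarith))
          _ = T/4 := by rw [hw'_def, Real.log_exp]
      linarith
    have htail : T/2 ≤ ∑ p ∈ S.filter (fun p : ℕ => ¬((p:ℝ) ≤ w')), (Real.log p / p) := by
      have hsplit := Finset.sum_filter_add_sum_filter_not S (fun p : ℕ => (p:ℝ) ≤ w')
        (fun p => Real.log p / p)
      have hlog4 : Real.log 4 ≤ 2 := by
        rw [log4_eq]
        nlinarith [log2_lt]
      have hT8 : (8:ℝ) ≤ T/4 := by linarith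
      have : ∑ p ∈ S.filter (fun p : ℕ => ¬((p:ℝ) ≤ w')), (Real.log p / p)
          = T - ∑ p ∈ S.filter (fun p : ℕ => (p:ℝ) ≤ w'), (Real.log p / p) := by
        rw [hT_def]
        linarith [hsplit]
      rw [this]
      linarith
    -- Sigma >= (T/4)^s
    have hSigge : (T/4)^s ≤ ∑ p ∈ S, (Real.log p) ^ s / p := by
      have h1 : ∀ p ∈ S.filter (fun p : ℕ => ¬((p:ℝ) ≤ w')),
          (T/4)^(s-1) * (Real.log p / p) ≤ (Real.log p)^s / p := by
        intro p hp
        rw [Finset.mem_filter] at hp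
        have hpw : w' < (p:ℝ) := lt_of_not_ge hp.2
        have hp2 : (2:ℝ) ≤ p := hS2' p hp.1
        have hlogp : T/4 ≤ Real.log p := by
          calc T/4 = Real.log w' := by rw [hw'_def, Real.log_exp]
            _ ≤ Real.log p := Real.log_le_log (by linarith) hpw.le
        have h2 : (T/4)^(s-1) ≤ (Real.log p)^(s-1) := pow_le_pow_left₀ hT4.le hlogp _
        have h3 : (Real.log p)^s = (Real.log p)^(s-1) * Real.log p := by
          rw [← pow_succ, Nat.sub_add_cancel hs]
        rw [h3, mul_div_assoc]
        apply mul_le_mul_of_nonneg_right h2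
        have : 0 ≤ Real.log p := by linarith
        positivity
      have h2 : (T/4)^(s-1) * (T/2) ≤ ∑ p ∈ S.filter (fun p : ℕ => ¬((p:ℝ) ≤ w')),
          (Real.log p)^s / p := by
        calc (T/4)^(s-1) * (T/2)
            ≤ (T/4)^(s-1) * ∑ p ∈ S.filter (fun p : ℕ => ¬((p:ℝ) ≤ w')), (Real.log p / p) :=
              mul_le_mul_of_nonneg_left htail (by positivity)
          _ = ∑ p ∈ S.filter (fun p : ℕ => ¬((p:ℝ) ≤ w')), (T/4)^(s-1) * (Real.log p / p) := by
              rw [Finset.mul_sum]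
          _ ≤ _ := Finset.sum_le_sum h1
      have h3 : ∑ p ∈ S.filter (fun p : ℕ => ¬((p:ℝ) ≤ w')), (Real.log p)^s / p
          ≤ ∑ p ∈ S, (Real.log p)^s / p := by
        apply Finset.sum_le_sum_of_subset_of_nonneg (Finset.filter_subset _ _)
        intro p hp _
        have h2 := hS2' p hp
        have : 0 ≤ Real.log p := Real.log_nonneg (by linarith)
        positivity
      have h4 : (T/4)^s ≤ (T/4)^(s-1) * (T/2) := by
        have e : (T/4)^s = (T/4)^(s-1) * (T/4) := by
          rw [← pow_succ, Nat.sub_add_cancel hs]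
        rw [e]
        apply mul_le_mul_of_nonneg_left (by linarith) (by positivity)
      linarith
    -- conclude
    have hfinal : (∏ p ∈ S, ((p : ℝ) / ((p : ℝ) - 1))) ^ s
        ≤ (4 * Real.exp 10)^s * (T/4)^s := by
      rw [← mul_pow]
      apply pow_le_pow_left₀ hD0
      calc ∏ p ∈ S, ((p : ℝ) / ((p : ℝ) - 1)) ≤ Real.exp u := hD
        _ = Real.exp 10 * Real.exp (u - 10) := by
            rw [← Real.exp_add]
            congr 1
            ring
        _ ≤ Real.exp 10 * T := by
            apply mul_le_mul_of_nonneg_left hTexp (Real.exp_pos 10).le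
        _ = 4 * Real.exp 10 * (T/4) := by ring
    have h5 : (4 * Real.exp 10 : ℝ) ≤ Real.exp 20 := by
      have h6 : (4:ℝ) ≤ Real.exp 10 := by
        have := Real.add_one_le_exp (10:ℝ)
        linarith
      have h7 : Real.exp 10 * Real.exp 10 = Real.exp 20 := by
        rw [← Real.exp_add]
        norm_num
      calc (4:ℝ) * Real.exp 10 ≤ Real.exp 10 * Real.exp 10 :=
            mul_le_mul_of_nonneg_right h6 (Real.exp_pos 10).le
        _ = Real.exp 20 := h7
    calc (∏ p ∈ S, ((p : ℝ) / ((p : ℝ) - 1))) ^ s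
        ≤ (4 * Real.exp 10)^s * (T/4)^s := hfinal
      _ ≤ (Real.exp 20)^s * (T/4)^s :=
          mul_le_mul_of_nonneg_right (pow_le_pow_left₀ (by positivity) h5 s)
            (pow_nonneg hT4.le s)
      _ ≤ (Real.exp 20)^s * (1 + ∑ p ∈ S, (Real.log p) ^ s / p) := by
          apply mul_le_mul_of_nonneg_left _ (pow_nonneg (Real.exp_pos 20).le s)
          linarith

lemma pointwise (α : ℝ) (hα0 : 0 < α) (hα1 : α < 1) (M : ℝ)
    (hM : Real.exp (Real.exp (4/α)) < M) (a : ℕ) (ha : 0 < a) (haM : (a:ℝ) ≤ M)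
    (s : ℕ) (hs : 1 ≤ s) :
    ((a:ℝ) / ((a.totient : ℝ)))^s
      ≤ (Real.exp 20 * Real.exp (2*(Real.log (2/α) + 20)))^s *
        (1 + ∑ p ∈ (P ⌊(Real.log M)^α⌋₊).filter (fun p => p ∣ a), (Real.log p)^s / p) := by
  set q := ⌊(Real.log M)^α⌋₊ with hq
  have hratio := totient_ratio ha
  have hsplit := Finset.prod_filter_mul_prod_filter_not a.primeFactors
    (fun p : ℕ => p ≤ q) (fun p : ℕ => (p:ℝ)/((p:ℝ)-1))
  have hseteq : a.primeFactors.filter (fun p : ℕ => p ≤ q) = (P q).filter (fun p => p ∣ a) := by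
    ext p
    simp only [Finset.mem_filter, Nat.mem_primeFactors, mem_P]
    constructor
    · rintro ⟨⟨hp, hpa, _⟩, hpq⟩
      exact ⟨⟨hp, hpq⟩, hpa⟩
    · rintro ⟨⟨hp, hpq⟩, hpa⟩
      exact ⟨⟨hp, hpa, ha.ne'⟩, hpq⟩
  have hDs := claimB (a.primeFactors.filter (fun p : ℕ => p ≤ q))
    (fun p hp => Nat.prime_of_mem_primeFactors (Finset.mem_filter.mp hp).1) s hs
  have hEl := claimA α hα0 hα1 M hM a ha haM
  have hDs0 : 0 ≤ ∏ p ∈ a.primeFactors.filter (fun p : ℕ => p ≤ q), ((p:ℝ)/((p:ℝ)-1)) :=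
    prod_ratio_nonneg _ (fun p hp =>
      (Nat.prime_of_mem_primeFactors (Finset.mem_filter.mp hp).1).two_le)
  have hEl0 : 0 ≤ ∏ p ∈ a.primeFactors.filter (fun p : ℕ => ¬ p ≤ q), ((p:ℝ)/((p:ℝ)-1)) :=
    prod_ratio_nonneg _ (fun p hp =>
      (Nat.prime_of_mem_primeFactors (Finset.mem_filter.mp hp).1).two_le)
  have hsum0 : (0:ℝ) ≤ 1 + ∑ p ∈ a.primeFactors.filter (fun p : ℕ => p ≤ q),
      (Real.log p)^s / p := by
    have h1 : (0:ℝ) ≤ ∑ p ∈ a.primeFactors.filter (fun p : ℕ => p ≤ q), (Real.log p)^s / p := by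
      apply Finset.sum_nonneg
      intro p hp
      have h2 : 2 ≤ p := (Nat.prime_of_mem_primeFactors (Finset.mem_filter.mp hp).1).two_le
      have h3 : (1:ℝ) ≤ p := by exact_mod_cast Nat.one_le_of_lt h2
      have := Real.log_nonneg h3
      positivity
    linarith
  rw [hratio, ← hsplit, mul_pow]
  have hElpow : (∏ p ∈ a.primeFactors.filter (fun p : ℕ => ¬ p ≤ q), ((p:ℝ)/((p:ℝ)-1)))^s
      ≤ (Real.exp (2*(Real.log (2/α) + 20)))^s := pow_le_pow_left₀ hEl0 hEl s
  calc (∏ p ∈ a.primeFactors.filter (fun p : ℕ => p ≤ q), ((p:ℝ)/((p:ℝ)-1)))^s *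
        (∏ p ∈ a.primeFactors.filter (fun p : ℕ => ¬ p ≤ q), ((p:ℝ)/((p:ℝ)-1)))^s
      ≤ ((Real.exp 20)^s * (1 + ∑ p ∈ a.primeFactors.filter (fun p : ℕ => p ≤ q),
          (Real.log p)^s / p)) * (Real.exp (2*(Real.log (2/α) + 20)))^s := by
        apply mul_le_mul hDs hElpow (pow_nonneg hEl0 s)
        exact mul_nonneg (pow_nonneg (Real.exp_pos 20).le s) hsum0
    _ = (Real.exp 20 * Real.exp (2*(Real.log (2/α) + 20)))^s *
        (1 + ∑ p ∈ a.primeFactors.filter (fun p : ℕ => p ≤ q), (Real.log p)^s / p) := by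
        rw [mul_pow]
        ring
    _ = _ := by rw [hseteq]

end

end RomanoffAux

/-- For `0 < α < 1` there is `C(α) > 0` such that for all reals `M ≥ 1`,
all finite lists `a 1, …, a N` of positive integers bounded by `M`, and all positive
integers `s`,
`∑_{n=1}^N (a n / φ(a n))^s ≤ C^s (N + ∑_{p ≤ (ln M)^α} ω(p) (ln p)^s / p)`,
where `ω(d) = #{1 ≤ n ≤ N : d ∣ a n}`. -/
theorem romanoff_T1 (α : ℝ) (hα0 : 0 < α) (hα1 : α < 1) :
    ∃ C : ℝ, 0 < C ∧
      ∀ (M : ℝ), 1 ≤ M → ∀ (N : ℕ) (a : ℕ → ℕ),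
        (∀ n, 1 ≤ n → n ≤ N → 0 < a n ∧ (a n : ℝ) ≤ M) →
        ∀ s : ℕ, 0 < s →
          ∑ n ∈ Finset.Icc 1 N, ((a n : ℝ) / ((a n).totient : ℝ)) ^ s ≤
            C ^ s * ((N : ℝ) +
              ∑ p ∈ (Finset.range (⌊(Real.log M) ^ α⌋₊ + 1)).filter Nat.Prime,
                (((Finset.Icc 1 N).filter (fun n => p ∣ a n)).card : ℝ) *
                  (Real.log p) ^ s / (p : ℝ)) := by
  classical
  refine ⟨Real.exp (Real.exp (4/α)) + Real.exp 20 * Real.exp (2*(Real.log (2/α) + 20)),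
    by positivity, ?_⟩
  intro M hM N a ha s hs
  have hs1 : 1 ≤ s := hs
  set C1 := Real.exp (Real.exp (4/α)) with hC1def
  set C2 := Real.exp 20 * Real.exp (2*(Real.log (2/α) + 20)) with hC2def
  set q := ⌊(Real.log M)^α⌋₊ with hqdef
  have hC1pos : 0 < C1 := Real.exp_pos _
  have hC2pos : 0 < C2 := by rw [hC2def]; positivity
  have hCpos : 0 < C1 + C2 := by linarith
  have hPy : (Finset.range (q + 1)).filter Nat.Prime = RomanoffAux.P q := rfl
  rw [hPy]
  have hSnn : (0:ℝ) ≤ ∑ p ∈ RomanoffAux.P q,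
      (((Finset.Icc 1 N).filter (fun n => p ∣ a n)).card : ℝ) * (Real.log p)^s / p := by
    apply Finset.sum_nonneg
    intro p hp
    have h2 : (1:ℝ) ≤ p := RomanoffAux.one_le_of_mem_P hp
    have hl : 0 ≤ Real.log p := Real.log_nonneg h2
    positivity
  rcases le_or_gt M C1 with hMC | hMC
  · -- small M
    have hbound : ∀ n ∈ Finset.Icc 1 N, ((a n : ℝ)/((a n).totient:ℝ))^s ≤ (C1+C2)^s := by
      intro n hn
      obtain ⟨hn1, hnN⟩ := Finset.mem_Icc.mp hn
      obtain ⟨hapos, haM⟩ := ha n hn1 hnN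
      have hφ : (1:ℝ) ≤ ((a n).totient : ℝ) := by
        exact_mod_cast Nat.one_le_iff_ne_zero.mpr (Nat.totient_pos.mpr hapos).ne'
      have h1 : (a n : ℝ)/((a n).totient:ℝ) ≤ (a n : ℝ) :=
        div_le_self (Nat.cast_nonneg _) hφ
      apply pow_le_pow_left₀ (div_nonneg (Nat.cast_nonneg _) (by linarith))
      calc (a n : ℝ)/((a n).totient:ℝ) ≤ (a n : ℝ) := h1
        _ ≤ M := haM
        _ ≤ C1 := hMC
        _ ≤ C1 + C2 := le_add_of_nonneg_right hC2pos.le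
    calc ∑ n ∈ Finset.Icc 1 N, ((a n : ℝ)/((a n).totient:ℝ))^s
        ≤ ∑ _n ∈ Finset.Icc 1 N, (C1+C2)^s := Finset.sum_le_sum hbound
      _ = (N:ℝ) * (C1+C2)^s := by
          rw [Finset.sum_const, Nat.card_Icc, nsmul_eq_mul]
          norm_num
      _ ≤ (C1+C2)^s * ((N:ℝ) + ∑ p ∈ RomanoffAux.P q,
            (((Finset.Icc 1 N).filter (fun n => p ∣ a n)).card : ℝ) * (Real.log p)^s / p) := by
          have hps : 0 ≤ (C1+C2)^s := pow_nonneg hCpos.le s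
          nlinarith [mul_nonneg hps hSnn]
  · -- large M
    have hpt : ∀ n ∈ Finset.Icc 1 N, ((a n : ℝ)/((a n).totient:ℝ))^s
        ≤ C2^s * (1 + ∑ p ∈ (RomanoffAux.P q).filter (fun p => p ∣ a n),
            (Real.log p)^s / p) := by
      intro n hn
      obtain ⟨hn1, hnN⟩ := Finset.mem_Icc.mp hn
      obtain ⟨hapos, haM⟩ := ha n hn1 hnN
      exact RomanoffAux.pointwise α hα0 hα1 M hMC (a n) hapos haM s hs1
    have hsum := Finset.sum_le_sum hpt
    have hswap : ∑ n ∈ Finset.Icc 1 N, ∑ p ∈ (RomanoffAux.P q).filter (fun p => p ∣ a n),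
          (Real.log p)^s / p
        = ∑ p ∈ RomanoffAux.P q,
            (((Finset.Icc 1 N).filter (fun n => p ∣ a n)).card : ℝ) * ((Real.log p)^s / p) := by
      have h1 : ∀ n ∈ Finset.Icc 1 N,
          ∑ p ∈ (RomanoffAux.P q).filter (fun p => p ∣ a n), (Real.log p)^s / p
          = ∑ p ∈ RomanoffAux.P q, if p ∣ a n then (Real.log p)^s / p else 0 := by
        intro n _
        rw [Finset.sum_filter]
      rw [Finset.sum_congr rfl h1, Finset.sum_comm]
      apply Finset.sum_congr rfl
      intro p _
      rw [← Finset.sum_filter, Finset.sum_const, nsmul_eq_mul]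
    have heq2 : ∑ n ∈ Finset.Icc 1 N, C2^s * (1 + ∑ p ∈ (RomanoffAux.P q).filter
          (fun p => p ∣ a n), (Real.log p)^s / p)
        = C2^s * ((N:ℝ) + ∑ p ∈ RomanoffAux.P q,
            (((Finset.Icc 1 N).filter (fun n => p ∣ a n)).card : ℝ) * (Real.log p)^s / p) := by
      rw [← Finset.mul_sum, Finset.sum_add_distrib, Finset.sum_const, Nat.card_Icc,
        nsmul_eq_mul, hswap]
      have h3 : ∀ p ∈ RomanoffAux.P q,
          (((Finset.Icc 1 N).filter (fun n => p ∣ a n)).card : ℝ) * ((Real.log p)^s / p)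
          = (((Finset.Icc 1 N).filter (fun n => p ∣ a n)).card : ℝ) * (Real.log p)^s / p := by
        intro p _
        rw [mul_div_assoc]
      rw [Finset.sum_congr rfl h3]
      norm_num
    have hfinal := hsum.trans_eq heq2
    refine hfinal.trans ?_
    apply mul_le_mul_of_nonneg_right _ (by linarith)
    apply pow_le_pow_left₀ hC2pos.le
    linarith
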